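/- Let c, d, x ∈ R satisfy x ≤ 0, x ≤ c+d ≤ -x, x-1 ≤ c-d ≤ 1-x, and (c-d)² ≤ x(x-2), and let α, β ∈ [-1,1]. Then the 4×4 symmetric matrix F^Φ with diagonal entries F^Φ₁₁ = -(c+d)α - x, F^Φ₂₂ = 1 - cα + dβ - x, F^Φ₃₃ = 1 + cβ - dα - x, F^Φ₄₄ = (c+d)β - x, off-diagonal entries F^Φ₂₃ = F^Φ₃₂ = -1, and all other entries zero, is positive semidefinite. -/

import Mathlib

set_option maxHeartbeats 1000000

open Matrix

private lemma key_aux (s p q t w : ℝ) (hs : 1 ≤ s) (hp1 : -(s-1) ≤ p)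
    (hq : q^2 ≤ s^2-1) (ht : 0 ≤ t) (hw : 0 ≤ w) (htw : t + w ≤ 1) :
    1 + q^2*w^2 ≤ (s+p*t)^2 := by
  have h2 : 0 ≤ 2*s + (p-(s-1))*t := by
    nlinarith [mul_nonneg (by linarith : (0:ℝ) ≤ s-1) (by linarith : (0:ℝ) ≤ 1-t),
      mul_nonneg (by linarith : (0:ℝ) ≤ p+(s-1)) ht]
  nlinarith [mul_nonneg (mul_nonneg (by linarith : (0:ℝ) ≤ p+(s-1)) ht) h2,
    mul_nonneg (by linarith : (0:ℝ) ≤ s^2-1-q^2) (sq_nonneg w),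
    mul_nonneg (by nlinarith : (0:ℝ) ≤ s^2-1)
      (mul_nonneg (by linarith : (0:ℝ) ≤ 1-t-w) (by linarith : (0:ℝ) ≤ 1-t+w)),
    mul_nonneg (mul_nonneg (by linarith : (0:ℝ) ≤ s-1) ht) (by linarith : (0:ℝ) ≤ 1-t)]

private lemma scalar_aux (c d x α β : ℝ)
    (hx : x ≤ 0) (h1 : x ≤ c + d) (h2 : c + d ≤ -x)
    (h3 : x - 1 ≤ c - d) (h4 : c - d ≤ 1 - x)
    (h5 : (c - d) ^ 2 ≤ x * (x - 2))
    (hα1 : -1 ≤ α) (hα2 : α ≤ 1) (hβ1 : -1 ≤ β) (hβ2 : β ≤ 1) :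
    1 ≤ (1 - c * α + d * β - x) * (1 + c * β - d * α - x) ∧
    2 ≤ (1 - c * α + d * β - x) + (1 + c * β - d * α - x) := by
  have hq : (c-d)^2 ≤ (1-x)^2 - 1 := by nlinarith
  rcases le_total α β with ht | ht <;> rcases le_total 0 (α + β) with hw | hw
  · have hk := key_aux (1-x) (c+d) (c-d) ((β-α)/2) ((α+β)/2)
      (by linarith) (by linarith) hq (by linarith) (by linarith) (by linarith)
    constructor <;> nlinarith [hk]
  · have hk := key_aux (1-x) (c+d) (c-d) ((β-α)/2) (-(α+β)/2)
      (by linarith) (by linarith) hq (by linarith) (by linarith) (by linarith)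
    constructor <;> nlinarith [hk]
  · have hk := key_aux (1-x) (-(c+d)) (c-d) ((α-β)/2) ((α+β)/2)
      (by linarith) (by linarith) hq (by linarith) (by linarith) (by linarith)
    constructor <;> nlinarith [hk]
  · have hk := key_aux (1-x) (-(c+d)) (c-d) ((α-β)/2) (-(α+β)/2)
      (by linarith) (by linarith) hq (by linarith) (by linarith) (by linarith)
    constructor <;> nlinarith [hk]

theorem FPhi_posSemidef (c d x α β : ℝ)
    (hx : x ≤ 0) (h1 : x ≤ c + d) (h2 : c + d ≤ -x)
    (h3 : x - 1 ≤ c - d) (h4 : c - d ≤ 1 - x)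
    (h5 : (c - d) ^ 2 ≤ x * (x - 2))
    (hα : α ∈ Set.Icc (-1 : ℝ) 1) (hβ : β ∈ Set.Icc (-1 : ℝ) 1) :
    (!![-(c + d) * α - x, 0, 0, 0;
        0, 1 - c * α + d * β - x, -1, 0;
        0, -1, 1 + c * β - d * α - x, 0;
        0, 0, 0, (c + d) * β - x] : Matrix (Fin 4) (Fin 4) ℝ).PosSemidef := by
  obtain ⟨hα1, hα2⟩ := hα
  obtain ⟨hβ1, hβ2⟩ := hβ
  obtain ⟨hab, hsum⟩ := scalar_aux c d x α β hx h1 h2 h3 h4 h5 hα1 hα2 hβ1 hβ2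
  have ha : 0 ≤ 1 - c * α + d * β - x := by nlinarith
  have hb : 0 ≤ 1 + c * β - d * α - x := by nlinarith
  have hF11 : 0 ≤ -(c + d) * α - x := by nlinarith
  have hF44 : 0 ≤ (c + d) * β - x := by nlinarith
  rw [posSemidef_iff_dotProduct_mulVec]
  constructor
  · ext i j
    fin_cases i <;> fin_cases j <;> simp [Matrix.conjTranspose_apply, Matrix.vecHead, Matrix.vecTail]
  · intro v
    have : star v = v := by ext i; simp
    rw [this]
    simp [mulVec, dotProduct, Fin.sum_univ_four, Matrix.vecHead, Matrix.vecTail]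
    nlinarith [mul_nonneg hF11 (sq_nonneg (v 0)), mul_nonneg hF44 (sq_nonneg (v 3)),
      sq_nonneg ((1 - c * α + d * β - x) * v 1 - v 2),
      mul_nonneg (by nlinarith : (0:ℝ) ≤ (1 - c * α + d * β - x)*(1 + c * β - d * α - x) - 1) (sq_nonneg (v 2))]
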